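/- arXiv:2006.00125 — 2 statements merged into one kernel-verified Lean document; each statement's English description precedes it below -/
import Mathlib

section
/- Let A ∈ ℝ^{n×n} be diagonalizable over ℂ with the column space of A contained in the column space of B ∈ ℝ^{n×m}. Suppose x_0 = Σ_{ℓ=1}^{k} β_ℓ u_ℓ where u_1, …, u_k ∈ ℂⁿ are linearly independent eigenvectors of A with eigenvalues λ_1, …, λ_k, all β_ℓ ∈ ℂ nonzero, and the set {λ_1, …, λ_k} consists of exactly r distinct values μ_1, …, μ_r. Let (x_t) be the DGR closed-loop trajectory with α = 0 started at x_0, and define the complex subspace S = span_ℂ{ Σ_{ℓ: λ_ℓ = μ_i} β_ℓ u_ℓ : i = 1, …, r }. Then the complex span of {x_0, x_1, …, x_{r−1}} equals S, and x_{r+1} = 0. -/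
open Matrix


namespace Stmt17Aux

variable {n : ℕ}

def Cx {n : ℕ} (v : Fin n → ℝ) : Fin n → ℂ := fun j => (v j : ℂ)

lemma Cx_add (a b : Fin n → ℝ) : Cx (a + b) = Cx a + Cx b := by
  funext j; simp [Cx]

lemma Cx_smul (r : ℝ) (a : Fin n → ℝ) : Cx (r • a) = (r : ℂ) • Cx a := by
  funext j; simp [Cx]

lemma Cx_zero : Cx (0 : Fin n → ℝ) = 0 := by funext j; simp [Cx]

lemma Cx_sub (a b : Fin n → ℝ) : Cx (a - b) = Cx a - Cx b := by
  funext j; simp [Cx]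

lemma Cx_mulVec (A : Matrix (Fin n) (Fin n) ℝ) (v : Fin n → ℝ) :
    (A.map (algebraMap ℝ ℂ)).mulVec (Cx v) = Cx (A.mulVec v) := by
  funext j
  simp [Cx, Matrix.mulVec, dotProduct, Matrix.map_apply]

lemma mem_span_Cx {s : Set (Fin n → ℝ)} {v : Fin n → ℝ}
    (h : v ∈ Submodule.span ℝ s) : Cx v ∈ Submodule.span ℂ (Cx '' s) := by
  induction h using Submodule.span_induction with
  | mem a ha => exact Submodule.subset_span ⟨a, ha, rfl⟩
  | zero => rw [Cx_zero]; exact Submodule.zero_mem _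
  | add a b _ _ ha hb => rw [Cx_add]; exact Submodule.add_mem _ ha hb
  | smul r a _ ha => rw [Cx_smul]; exact Submodule.smul_mem _ _ ha

lemma Cx_mem_span {s : Set (Fin n → ℝ)} {v : Fin n → ℝ}
    (h : Cx v ∈ Submodule.span ℂ (Cx '' s)) : v ∈ Submodule.span ℝ s := by
  have key : ∀ w ∈ Submodule.span ℂ (Cx '' s),
      (fun j => (w j).re) ∈ Submodule.span ℝ s ∧
      (fun j => (w j).im) ∈ Submodule.span ℝ s := by
    intro w hw
    induction hw using Submodule.span_induction with
    | mem a ha =>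
      obtain ⟨b, hb, rfl⟩ := ha
      constructor
      · have : (fun j => ((Cx b) j).re) = b := by funext j; simp [Cx]
        rw [this]; exact Submodule.subset_span hb
      · have : (fun j => ((Cx b) j).im) = 0 := by funext j; simp [Cx]
        rw [this]; exact Submodule.zero_mem _
    | zero => exact ⟨Submodule.zero_mem _, Submodule.zero_mem _⟩
    | add a b _ _ ha hb =>
      constructor
      · have : (fun j => ((a + b) j).re) = (fun j => (a j).re) + (fun j => (b j).re) := by
          funext j; simp
        rw [this]; exact Submodule.add_mem _ ha.1 hb.1
      · have : (fun j => ((a + b) j).im) = (fun j => (a j).im) + (fun j => (b j).im) := by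
          funext j; simp
        rw [this]; exact Submodule.add_mem _ ha.2 hb.2
    | smul c a _ ha =>
      constructor
      · have : (fun j => ((c • a) j).re)
            = c.re • (fun j => (a j).re) - c.im • (fun j => (a j).im) := by
          funext j; simp [Complex.mul_re]
        rw [this]; exact Submodule.sub_mem _ (Submodule.smul_mem _ _ ha.1)
          (Submodule.smul_mem _ _ ha.2)
      · have : (fun j => ((c • a) j).im)
            = c.re • (fun j => (a j).im) + c.im • (fun j => (a j).re) := by
          funext j; simp [Complex.mul_im]
        rw [this]; exact Submodule.add_mem _ (Submodule.smul_mem _ _ ha.2)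
          (Submodule.smul_mem _ _ ha.1)
  have := (key _ h).1
  have e : (fun j => ((Cx v) j).re) = v := by funext j; simp [Cx]
  rwa [e] at this

lemma span_Cx_eq {s s' : Set (Fin n → ℝ)}
    (h : Submodule.span ℝ s = Submodule.span ℝ s') :
    Submodule.span ℂ (Cx '' s) = Submodule.span ℂ (Cx '' s') := by
  apply le_antisymm <;>
  · rw [Submodule.span_le]
    rintro _ ⟨a, ha, rfl⟩
    apply mem_span_Cx
    first
    | exact h ▸ Submodule.subset_span ha
    | exact h.symm ▸ Submodule.subset_span ha

lemma range_fin_eq {α : Type*} (f : ℕ → α) (t : ℕ) :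
    (Set.range fun i : Fin t => f i.val) = f '' Set.Iio t := by
  ext a
  constructor
  · rintro ⟨i, rfl⟩; exact ⟨i.val, i.isLt, rfl⟩
  · rintro ⟨m, hm, rfl⟩; exact ⟨⟨m, hm⟩, rfl⟩

end Stmt17Aux





noncomputable section

/-- The Euclidean norm on `Fin n → ℝ`. -/
def eucNorm {n : ℕ} (x : Fin n → ℝ) : ℝ := Real.sqrt (∑ i, (x i) ^ 2)

/-- `P` is the matrix of the orthogonal projection of `ℝⁿ` onto the subspace `V`:
the unique symmetric idempotent matrix whose range is `V`. -/
def IsProjMatrix {n : ℕ} (P : Matrix (Fin n) (Fin n) ℝ) (V : Submodule ℝ (Fin n → ℝ)) : Prop :=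
  P.IsSymm ∧ P * P = P ∧ LinearMap.range P.mulVecLin = V

/-- A real square matrix is Schur stable if every complex eigenvalue has modulus `< 1`,
i.e. its spectral radius is `< 1`. -/
def SchurStable {n : ℕ} (M : Matrix (Fin n) (Fin n) ℝ) : Prop :=
  ∀ (μ : ℂ) (v : Fin n → ℂ), v ≠ 0 →
    (M.map (algebraMap ℝ ℂ)).mulVec v = μ • v → ‖μ‖ < 1

/-- The operator norm of a matrix induced by the Euclidean vector norm:
`‖M‖ = sup {‖M u‖ : ‖u‖ = 1}`. -/
def l2OpNorm {n m : ℕ} (M : Matrix (Fin n) (Fin m) ℝ) : ℝ :=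
  sSup {c | ∃ x : Fin m → ℝ, eucNorm x = 1 ∧ c = eucNorm (M.mulVec x)}

/-- The instability number of order `t` of `A`:
`M_t(A) = sup { ∏ i ‖A v i‖ : (v 1, …, v t) orthonormal in ℝⁿ }`. -/
def instabilityNumber {n : ℕ} (A : Matrix (Fin n) (Fin n) ℝ) (t : ℕ) : ℝ :=
  sSup {c | ∃ v : Fin t → (Fin n → ℝ),
    (∀ i j, v i ⬝ᵥ v j = if i = j then 1 else 0) ∧ c = ∏ i, eucNorm (A.mulVec (v i))}

open Stmt17Aux

/-- The DGR data spans exactly the subspace of excited modes, and the state is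
regulated to zero after `r + 1` steps. -/
theorem stmt17 {n m : ℕ} (A : Matrix (Fin n) (Fin n) ℝ) (B : Matrix (Fin n) (Fin m) ℝ)
    (hdiag : ∃ P D : Matrix (Fin n) (Fin n) ℂ,
      IsUnit P.det ∧ D.IsDiag ∧ A.map (algebraMap ℝ ℂ) = P * D * P⁻¹)
    (hcol : LinearMap.range A.mulVecLin ≤ LinearMap.range B.mulVecLin)
    (PB : Matrix (Fin n) (Fin n) ℝ)
    (hPB : IsProjMatrix PB (LinearMap.range B.mulVecLin))
    (k : ℕ) (lam : Fin k → ℂ) (u : Fin k → (Fin n → ℂ))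
    (hu : LinearIndependent ℂ u)
    (heig : ∀ ℓ, (A.map (algebraMap ℝ ℂ)).mulVec (u ℓ) = lam ℓ • u ℓ)
    (β : Fin k → ℂ) (hβ : ∀ ℓ, β ℓ ≠ 0)
    (x : ℕ → Fin n → ℝ)
    (hx0 : (fun j => (x 0 j : ℂ)) = ∑ ℓ, β ℓ • u ℓ)
    (Pv : ℕ → Matrix (Fin n) (Fin n) ℝ)
    (hPv : ∀ t, IsProjMatrix (Pv t)
      (Submodule.span ℝ (Set.range fun i : Fin t => x i.val)))
    (hdyn : ∀ t, x (t + 1) = A.mulVec (x t) - (PB * A).mulVec ((Pv t).mulVec (x t)))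
    (r : ℕ) (μ : Fin r → ℂ) (hμinj : Function.Injective μ)
    (hμrange : Set.range lam = Set.range μ)
    (S : Submodule ℂ (Fin n → ℂ))
    (hS : S = Submodule.span ℂ (Set.range fun i : Fin r =>
      ∑ ℓ ∈ Finset.univ.filter (fun ℓ : Fin k => lam ℓ = μ i), β ℓ • u ℓ)) :
    Submodule.span ℂ (Set.range fun i : Fin r => (fun j => (x i.val j : ℂ))) = S ∧
      x (r + 1) = 0 := by
  obtain ⟨hPBsymm, hPBidem, hPBrange⟩ := hPB
  -- mode sums
  set w : Fin r → (Fin n → ℂ) := fun i =>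
    ∑ ℓ ∈ Finset.univ.filter (fun ℓ : Fin k => lam ℓ = μ i), β ℓ • u ℓ with hw_def
  -- absorb the projection PB
  have hPBid : ∀ v : Fin n → ℝ, PB.mulVec (A.mulVec v) = A.mulVec v := by
    intro v
    have hv : A.mulVec v ∈ LinearMap.range B.mulVecLin := hcol ⟨v, rfl⟩
    rw [← hPBrange] at hv
    obtain ⟨z, hz⟩ := hv
    have h2 : PB.mulVec (PB.mulVec z) = PB.mulVec z := by
      rw [Matrix.mulVec_mulVec, hPBidem]
    rw [Matrix.mulVecLin_apply] at hz
    rw [← hz]; exact h2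
  have hdyn' : ∀ t, x (t + 1) = A.mulVec (x t - (Pv t).mulVec (x t)) := by
    intro t
    rw [hdyn t, Matrix.mulVec_sub, ← Matrix.mulVec_mulVec, hPBid]
  -- Krylov sequence
  set y : ℕ → Fin n → ℝ := fun t => (A ^ t).mulVec (x 0) with hy_def
  have hy0 : y 0 = x 0 := by simp [hy_def]
  have hyS : ∀ t, y (t + 1) = A.mulVec (y t) := by
    intro t
    simp only [hy_def, pow_succ']
    rw [← Matrix.mulVec_mulVec]
  have hPvMem : ∀ t (v : Fin n → ℝ), (Pv t).mulVec v ∈ Submodule.span ℝ (x '' Set.Iio t) := by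
    intro t v
    have h1 : (Pv t).mulVec v ∈ LinearMap.range (Pv t).mulVecLin := ⟨v, rfl⟩
    rw [(hPv t).2.2, range_fin_eq] at h1
    exact h1
  have Vmono : ∀ {s t : ℕ}, s ≤ t →
      Submodule.span ℝ (x '' Set.Iio s) ≤ Submodule.span ℝ (x '' Set.Iio t) :=
    fun h => Submodule.span_mono (Set.image_mono (Set.Iio_subset_Iio h))
  have Kmono : ∀ {s t : ℕ}, s ≤ t →
      Submodule.span ℝ (y '' Set.Iio s) ≤ Submodule.span ℝ (y '' Set.Iio t) :=
    fun h => Submodule.span_mono (Set.image_mono (Set.Iio_subset_Iio h))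
  have hAK : ∀ t, ∀ v ∈ Submodule.span ℝ (y '' Set.Iio t),
      A.mulVec v ∈ Submodule.span ℝ (y '' Set.Iio (t + 1)) := by
    intro t v hv
    induction hv using Submodule.span_induction with
    | mem a ha =>
      obtain ⟨j, hj, rfl⟩ := ha
      have hj' : j < t := hj
      exact Submodule.subset_span ⟨j + 1, Set.mem_Iio.mpr (by omega), (hyS j)⟩
    | zero => rw [Matrix.mulVec_zero]; exact Submodule.zero_mem _
    | add a b _ _ ha hb => rw [Matrix.mulVec_add]; exact Submodule.add_mem _ ha hb
    | smul c a _ ha => rw [Matrix.mulVec_smul]; exact Submodule.smul_mem _ _ ha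
  have hAV : ∀ t, ∀ v ∈ Submodule.span ℝ (x '' Set.Iio t),
      A.mulVec v ∈ Submodule.span ℝ (x '' Set.Iio (t + 1)) := by
    intro t
    induction t using Nat.strong_induction_on with
    | _ t IH =>
      intro v hv
      induction hv using Submodule.span_induction with
      | mem a ha =>
        obtain ⟨j, hj, rfl⟩ := ha
        have hx' : A.mulVec (x j) = x (j + 1) + A.mulVec ((Pv j).mulVec (x j)) := by
          rw [hdyn' j, Matrix.mulVec_sub]; abel
        have hj' : j < t := hj
        rw [hx']
        refine Submodule.add_mem _
          (Submodule.subset_span ⟨j + 1, Set.mem_Iio.mpr (by omega), rfl⟩) ?_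
        exact Vmono (by omega) (IH j hj' _ (hPvMem j (x j)))
      | zero => rw [Matrix.mulVec_zero]; exact Submodule.zero_mem _
      | add a b _ _ ha hb => rw [Matrix.mulVec_add]; exact Submodule.add_mem _ ha hb
      | smul c a _ ha => rw [Matrix.mulVec_smul]; exact Submodule.smul_mem _ _ ha
  have hVK : ∀ t, Submodule.span ℝ (x '' Set.Iio t) = Submodule.span ℝ (y '' Set.Iio t) := by
    intro t
    induction t using Nat.strong_induction_on with
    | _ t IH =>
      match t with
      | 0 => rw [show (Set.Iio 0 : Set ℕ) = ∅ by ext a; simp, Set.image_empty, Set.image_empty]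
      | (t' + 1) =>
        apply le_antisymm
        · rw [Submodule.span_le]
          rintro a ⟨j, hj, rfl⟩
          have hj' : j < t' + 1 := hj
          rw [SetLike.mem_coe]
          refine Kmono (show j + 1 ≤ t' + 1 by omega) ?_
          match j with
          | 0 => exact Submodule.subset_span ⟨0, Set.mem_Iio.mpr (by omega), hy0⟩
          | (s + 1) =>
            have hv : x s - (Pv s).mulVec (x s) ∈ Submodule.span ℝ (y '' Set.Iio (s + 1)) := by
              rw [← IH (s + 1) (by omega)]
              exact Submodule.sub_mem _ (Submodule.subset_span ⟨s, Set.mem_Iio.mpr (by omega), rfl⟩)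
                (Vmono (Nat.le_succ s) (hPvMem s (x s)))
            rw [hdyn' s]
            exact hAK (s + 1) _ hv
        · rw [Submodule.span_le]
          rintro a ⟨j, hj, rfl⟩
          have hj' : j < t' + 1 := hj
          rw [SetLike.mem_coe]
          refine Vmono (show j + 1 ≤ t' + 1 by omega) ?_
          match j with
          | 0 => exact Submodule.subset_span ⟨0, Set.mem_Iio.mpr (by omega), hy0.symm⟩
          | (s + 1) =>
            have hv : y s ∈ Submodule.span ℝ (x '' Set.Iio (s + 1)) := by
              rw [IH (s + 1) (by omega)]
              exact Submodule.subset_span ⟨s, Set.mem_Iio.mpr (by omega), rfl⟩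
            rw [hyS s]
            exact hAV (s + 1) _ hv
  -- fibration of the eigenvalues
  have hmem : ∀ ℓ, lam ℓ ∈ Set.range μ := fun ℓ => hμrange ▸ Set.mem_range_self ℓ
  choose g hg using hmem
  have hfilter : ∀ i : Fin r, Finset.univ.filter (fun ℓ : Fin k => g ℓ = i)
      = Finset.univ.filter (fun ℓ : Fin k => lam ℓ = μ i) := by
    intro i
    apply Finset.filter_congr
    intro ℓ _
    constructor
    · rintro h; subst h; simp [hg ℓ]
    · intro h; exact hμinj (by rw [hg ℓ, h])
  have mulVec_sum : ∀ {ι : Type} (M : Matrix (Fin n) (Fin n) ℂ) (s : Finset ι)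
      (f : ι → Fin n → ℂ),
      M.mulVec (∑ ℓ ∈ s, f ℓ) = ∑ ℓ ∈ s, M.mulVec (f ℓ) := by
    intro ι M s f
    exact map_sum M.mulVecLin f s
  have hAw : ∀ i, (A.map (algebraMap ℝ ℂ)).mulVec (w i) = μ i • w i := by
    intro i
    simp only [hw_def]
    rw [mulVec_sum, Finset.smul_sum]
    apply Finset.sum_congr rfl
    intro ℓ hℓ
    have hl : lam ℓ = μ i := (Finset.mem_filter.1 hℓ).2
    rw [Matrix.mulVec_smul, heig ℓ, hl, smul_comm]
  have hCx0 : Cx (x 0) = ∑ i, w i := by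
    have h1 : Cx (x 0) = ∑ ℓ, β ℓ • u ℓ := hx0
    rw [h1, ← Finset.sum_fiberwise Finset.univ g (fun ℓ => β ℓ • u ℓ)]
    apply Finset.sum_congr rfl
    intro i _
    rw [hfilter i]
  have hCy : ∀ t, Cx (y t) = ∑ i, (μ i ^ t) • w i := by
    intro t
    induction t with
    | zero => rw [hy0, hCx0]; simp
    | succ t IH =>
      rw [hyS t, ← Cx_mulVec, IH, mulVec_sum]
      apply Finset.sum_congr rfl
      intro i _
      rw [Matrix.mulVec_smul, hAw i, smul_smul, ← pow_succ]
  -- the subspace spanned by the w i inside the complex Krylov space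
  have hwmem : ∀ i : Fin r, w i ∈ Submodule.span ℂ (Cx '' (y '' Set.Iio r)) := by
    intro i
    have hinj : Set.InjOn μ ↑(Finset.univ : Finset (Fin r)) := fun a _ b _ h => hμinj h
    have hdeg : (Lagrange.basis Finset.univ μ i).natDegree < r := by
      have h1 := Lagrange.natDegree_basis hinj (Finset.mem_univ i)
      rw [Finset.card_univ, Fintype.card_fin] at h1
      have : 0 < r := i.pos
      omega
    have key : ∑ j ∈ Finset.range r, (Lagrange.basis Finset.univ μ i).coeff j • Cx (y j)
        = w i := by
      calc ∑ j ∈ Finset.range r, (Lagrange.basis Finset.univ μ i).coeff j • Cx (y j)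
          = ∑ j ∈ Finset.range r, ∑ i' : Fin r,
              ((Lagrange.basis Finset.univ μ i).coeff j * μ i' ^ j) • w i' := by
            apply Finset.sum_congr rfl
            intro j _
            rw [hCy j, Finset.smul_sum]
            apply Finset.sum_congr rfl
            intro i' _
            rw [smul_smul]
        _ = ∑ i' : Fin r, (∑ j ∈ Finset.range r,
              (Lagrange.basis Finset.univ μ i).coeff j * μ i' ^ j) • w i' := by
            rw [Finset.sum_comm]
            apply Finset.sum_congr rfl
            intro i' _
            rw [Finset.sum_smul]
        _ = ∑ i' : Fin r, ((Lagrange.basis Finset.univ μ i).eval (μ i')) • w i' := by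
            apply Finset.sum_congr rfl
            intro i' _
            rw [Polynomial.eval_eq_sum_range' hdeg]
        _ = w i := by
            rw [Finset.sum_eq_single i]
            · rw [Lagrange.eval_basis_self hinj (Finset.mem_univ i), one_smul]
            · intro b _ hb
              rw [Lagrange.eval_basis_of_ne (Ne.symm hb) (Finset.mem_univ b), zero_smul]
            · intro hi; exact absurd (Finset.mem_univ i) hi
    rw [← key]
    exact Submodule.sum_mem _ fun j hj => Submodule.smul_mem _ _
      (Submodule.subset_span ⟨y j, ⟨j, Finset.mem_range.1 hj, rfl⟩, rfl⟩)
  have hspan : Submodule.span ℂ (Cx '' (y '' Set.Iio r)) = S := by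
    apply le_antisymm
    · rw [Submodule.span_le]
      rintro _ ⟨_, ⟨j, hj, rfl⟩, rfl⟩
      rw [SetLike.mem_coe, hS, hCy j]
      exact Submodule.sum_mem _ fun i _ => Submodule.smul_mem _ _
        (Submodule.subset_span ⟨i, rfl⟩)
    · rw [hS, Submodule.span_le]
      rintro _ ⟨i, rfl⟩
      exact hwmem i
  constructor
  · have hrange1 : (Set.range fun i : Fin r => (fun j => (x i.val j : ℂ)))
        = Cx '' (x '' Set.Iio r) := by
      rw [Set.image_image]
      exact range_fin_eq (fun t => Cx (x t)) r
    rw [hrange1, span_Cx_eq (hVK r), hspan]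
  · -- regulation to zero
    have hyrS : Cx (y r) ∈ Submodule.span ℂ (Cx '' (y '' Set.Iio r)) := by
      rw [hCy r]
      exact Submodule.sum_mem _ fun i _ => Submodule.smul_mem _ _ (hwmem i)
    have hyr : y r ∈ Submodule.span ℝ (y '' Set.Iio r) := Cx_mem_span hyrS
    have hKdrop : Submodule.span ℝ (y '' Set.Iio (r + 1)) ≤ Submodule.span ℝ (y '' Set.Iio r) := by
      rw [Submodule.span_le]
      rintro a ⟨j, hj, rfl⟩
      rcases Nat.lt_succ_iff_lt_or_eq.1 hj with h | rfl
      · exact Submodule.subset_span ⟨j, h, rfl⟩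
      · exact hyr
    have hxr : x r ∈ Submodule.span ℝ (x '' Set.Iio r) := by
      have h1 : x r ∈ Submodule.span ℝ (x '' Set.Iio (r + 1)) :=
        Submodule.subset_span ⟨r, Nat.lt_succ_self r, rfl⟩
      rw [hVK (r + 1)] at h1
      rw [hVK r]
      exact hKdrop h1
    have hproj : (Pv r).mulVec (x r) = x r := by
      have h1 : x r ∈ LinearMap.range (Pv r).mulVecLin := by
        rw [(hPv r).2.2, range_fin_eq]
        exact hxr
      obtain ⟨z, hz⟩ := h1
      rw [Matrix.mulVecLin_apply] at hz
      rw [← hz, Matrix.mulVec_mulVec, (hPv r).2.1]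
    rw [hdyn' r, hproj, sub_self, Matrix.mulVec_zero]
end
end

section
/- Fix n ≥ 1 and λ_1, …, λ_n ∈ ℝ. Let A ∈ ℝ^{n×n} be the upper bidiagonal matrix with A_{ii} = λ_i for i = 1, …, n, A_{i,i+1} = 1 for i = 1, …, n−1, and all other entries zero, and let B = e_n (the n-th standard basis vector). Then for every input sequence u_0, u_1, … ∈ ℝ, the trajectory defined by x_0 = e_1 and x_{t+1} = A x_t + B u_t satisfies e_1^⊤ x_t = λ_1^t for all t with 0 ≤ t < n. In particular, no choice of inputs can prevent the first state coordinate from growing like λ_1^t during the first n−1 steps. -/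
open Matrix

noncomputable section

/-- For the upper-bidiagonal motivating example, no input can affect the first state
coordinate during the first `n - 1` steps: `e₁ᵀ x_t = λ₁ ^ t` for `0 ≤ t < n`. -/
theorem stmt19 (n : ℕ) (hn : 0 < n) (lam : Fin n → ℝ)
    (A : Matrix (Fin n) (Fin n) ℝ)
    (hA : ∀ i j : Fin n,
      A i j = if j = i then lam i else if (j : ℕ) = (i : ℕ) + 1 then 1 else 0)
    (u : ℕ → ℝ) (x : ℕ → Fin n → ℝ)
    (hx0 : x 0 = (Pi.single (⟨0, hn⟩ : Fin n) 1 : Fin n → ℝ))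
    (hdyn : ∀ t, x (t + 1) =
      A.mulVec (x t) + u t • (Pi.single (⟨n - 1, by omega⟩ : Fin n) 1 : Fin n → ℝ)) :
    ∀ t, t < n → x t ⟨0, hn⟩ = lam ⟨0, hn⟩ ^ t := by
  suffices h : ∀ t, ∀ i : Fin n, (i : ℕ) + t < n →
      x t i = if (i : ℕ) = 0 then lam ⟨0, hn⟩ ^ t else 0 by
    intro t ht
    have := h t ⟨0, hn⟩ (by simpa using ht)
    simpa using this
  intro t
  induction t with
  | zero =>
    intro i hi
    rw [hx0]
    simp [Pi.single_apply, Fin.ext_iff]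
  | succ t ih =>
    intro i hi
    have hne : i ≠ (⟨n - 1, by omega⟩ : Fin n) := by
      intro h
      have := congrArg Fin.val h
      simp at this
      omega
    rw [hdyn t]
    have hsingle : (Pi.single (⟨n - 1, by omega⟩ : Fin n) 1 : Fin n → ℝ) i = 0 := by
      simp [Pi.single_apply, hne]
    have hsum : (A.mulVec (x t)) i = ∑ j, A i j * x t j := by
      simp [Matrix.mulVec, dotProduct]
    have hmain : (∑ j, A i j * x t j)
        = if (i : ℕ) = 0 then lam ⟨0, hn⟩ ^ (t + 1) else 0 := by
      rw [Finset.sum_eq_single (⟨0, hn⟩ : Fin n)]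
      · have hx0t : x t ⟨0, hn⟩ = lam ⟨0, hn⟩ ^ t := by
          have := ih ⟨0, hn⟩ (by simp; omega)
          simpa using this
        rw [hx0t, hA]
        by_cases hi0 : (i : ℕ) = 0
        · have : (⟨0, hn⟩ : Fin n) = i := by
            apply Fin.ext; simp [hi0]
          subst this
          simp [hi0, pow_succ, mul_comm]
        · have h1 : (⟨0, hn⟩ : Fin n) ≠ i := by
            intro h; apply hi0; exact (congrArg Fin.val h).symm
          simp [h1, hi0]
      · intro b _ hb
        have hbval : (b : ℕ) ≠ 0 := by
          intro h; apply hb; apply Fin.ext; simpa using h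
        rw [hA]
        by_cases hbi : b = i
        · subst hbi
          have : x t b = 0 := by
            have := ih b (by omega)
            simpa [hbval] using this
          simp [this]
        · by_cases hbi1 : (b : ℕ) = (i : ℕ) + 1
          · have : x t b = 0 := by
              have := ih b (by omega)
              simpa [hbval] using this
            simp [this]
          · simp [hbi, hbi1]
      · intro h
        exact absurd (Finset.mem_univ _) h
    rw [Pi.add_apply, hsum, hmain, Pi.smul_apply, hsingle]
    simp
end
end
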